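/- For an $L_x \times L_y$ rectangular lattice with $\max(L_x,L_y) \le m \le L_x + L_y - 2$, the number of unordered pairs of distinct lattice sites whose taxicab distance equals $m$ is $\frac{k(k+1)(k+2)}{3}$, where $k = L_x + L_y - 1 - m$. -/

import Mathlib

/-- Taxicab distance between two integer lattice points. -/
def taxi (p q : ℤ × ℤ) : ℤ := |p.1 - q.1| + |p.2 - q.2|

/-- The `Lx × Ly` rectangular lattice `{1,…,Lx} × {1,…,Ly}`. -/
noncomputable def sites (Lx Ly : ℤ) : Finset (ℤ × ℤ) := Finset.Icc (1, 1) (Lx, Ly)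

/-- The number of unordered pairs of distinct lattice sites at taxicab distance `m`. -/
noncomputable def pairCount (Lx Ly m : ℤ) : ℕ :=
  (((sites Lx Ly).powersetCard 2).filter
    (fun s => ∃ p ∈ s, ∃ q ∈ s, p ≠ q ∧ taxi p q = m)).card

lemma gauss (n : ℕ) : 2 * ∑ j ∈ Finset.range n, ((j:ℤ)+1) = n*(n+1) := by
  induction n with
  | zero => simp
  | succ n ih => rw [Finset.sum_range_succ, mul_add, ih]; push_cast; ring

lemma sum_aux (n : ℕ) : 6 * ∑ j ∈ Finset.range n, ((j:ℤ)+1)*((n:ℤ)-j) = n*(n+1)*(n+2) := by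
  induction n with
  | zero => simp
  | succ n ih =>
    have split : ∑ j ∈ Finset.range (n+1), ((j:ℤ)+1)*(((n+1:ℕ):ℤ)-j)
        = ∑ j ∈ Finset.range (n+1), (((j:ℤ)+1)*((n:ℤ)-j) + ((j:ℤ)+1)) :=
      Finset.sum_congr rfl (fun j _ => by push_cast; ring)
    rw [split, Finset.sum_add_distrib, Finset.sum_range_succ _ n]
    have g := gauss (n+1)
    push_cast at g ⊢
    nlinarith [ih, g]

lemma mem_sites {Lx Ly : ℤ} {p : ℤ × ℤ} :
    p ∈ sites Lx Ly ↔ 1 ≤ p.1 ∧ p.1 ≤ Lx ∧ 1 ≤ p.2 ∧ p.2 ≤ Ly := by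
  simp [sites, Finset.mem_Icc, Prod.le_def]; tauto

lemma taxi_comm (p q : ℤ × ℤ) : taxi p q = taxi q p := by
  simp [taxi, abs_sub_comm]

lemma taxi_eq_pos {p q : ℤ × ℤ} (h1 : p.1 < q.1) (h2 : p.2 < q.2) :
    taxi p q = (q.1 - p.1) + (q.2 - p.2) := by
  unfold taxi
  rw [abs_of_neg (by omega), abs_of_neg (by omega)]; ring

lemma taxi_eq_neg {p q : ℤ × ℤ} (h1 : p.1 < q.1) (h2 : q.2 < p.2) :
    taxi p q = (q.1 - p.1) + (p.2 - q.2) := by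
  unfold taxi
  rw [abs_of_neg (by omega), abs_of_pos (by omega)]; ring

/-- Ordered pairs of sites at taxicab distance `m` with increasing x-coordinate. -/
noncomputable def Sall (Lx Ly m : ℤ) : Finset ((ℤ×ℤ)×(ℤ×ℤ)) :=
  ((sites Lx Ly) ×ˢ (sites Lx Ly)).filter (fun pq => pq.1.1 < pq.2.1 ∧ taxi pq.1 pq.2 = m)

noncomputable def Spos (Lx Ly m : ℤ) : Finset ((ℤ×ℤ)×(ℤ×ℤ)) :=
  (Sall Lx Ly m).filter (fun pq => pq.1.2 < pq.2.2)

noncomputable def Sneg (Lx Ly m : ℤ) : Finset ((ℤ×ℤ)×(ℤ×ℤ)) :=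
  (Sall Lx Ly m).filter (fun pq => ¬ pq.1.2 < pq.2.2)

lemma mem_Sall {Lx Ly m : ℤ} {pq : (ℤ×ℤ)×(ℤ×ℤ)} :
    pq ∈ Sall Lx Ly m ↔ pq.1 ∈ sites Lx Ly ∧ pq.2 ∈ sites Lx Ly ∧
      pq.1.1 < pq.2.1 ∧ taxi pq.1 pq.2 = m := by
  simp [Sall, Finset.mem_filter, Finset.mem_product, and_assoc]

lemma mem_Spos {Lx Ly m : ℤ} {p q : ℤ×ℤ} :
    (p, q) ∈ Spos Lx Ly m ↔ 1 ≤ p.1 ∧ p.1 ≤ Lx ∧ 1 ≤ p.2 ∧ p.2 ≤ Ly ∧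
      1 ≤ q.1 ∧ q.1 ≤ Lx ∧ 1 ≤ q.2 ∧ q.2 ≤ Ly ∧
      p.1 < q.1 ∧ p.2 < q.2 ∧ (q.1 - p.1) + (q.2 - p.2) = m := by
  simp only [Spos, Finset.mem_filter, mem_Sall, mem_sites]
  constructor
  · rintro ⟨⟨hp, hq, hx, ht⟩, hy⟩
    rw [taxi_eq_pos hx hy] at ht
    tauto
  · rintro ⟨h1,h2,h3,h4,h5,h6,h7,h8,h9,h10,h11⟩
    refine ⟨⟨⟨h1,h2,h3,h4⟩, ⟨h5,h6,h7,h8⟩, h9, ?_⟩, h10⟩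
    rw [taxi_eq_pos h9 h10]; exact h11

lemma mem_Sneg {Lx Ly m : ℤ} (hLx : Lx ≤ m) {p q : ℤ×ℤ} :
    (p, q) ∈ Sneg Lx Ly m ↔ 1 ≤ p.1 ∧ p.1 ≤ Lx ∧ 1 ≤ p.2 ∧ p.2 ≤ Ly ∧
      1 ≤ q.1 ∧ q.1 ≤ Lx ∧ 1 ≤ q.2 ∧ q.2 ≤ Ly ∧
      p.1 < q.1 ∧ q.2 < p.2 ∧ (q.1 - p.1) + (p.2 - q.2) = m := by
  simp only [Sneg, Finset.mem_filter, mem_Sall, mem_sites]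
  constructor
  · rintro ⟨⟨hp, hq, hx, ht⟩, hy⟩
    have hy' : q.2 < p.2 := by
      rcases lt_trichotomy q.2 p.2 with h|h|h
      · exact h
      · exfalso
        unfold taxi at ht
        rw [h, abs_of_neg (by omega)] at ht
        simp at ht; omega
      · omega
    rw [taxi_eq_neg hx hy'] at ht
    tauto
  · rintro ⟨h1,h2,h3,h4,h5,h6,h7,h8,h9,h10,h11⟩
    refine ⟨⟨⟨h1,h2,h3,h4⟩, ⟨h5,h6,h7,h8⟩, h9, ?_⟩, by omega⟩
    rw [taxi_eq_neg h9 h10]; exact h11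

lemma pairCount_eq (Lx Ly m : ℤ) (hLy : Ly ≤ m) :
    pairCount Lx Ly m = (Sall Lx Ly m).card := by
  rw [pairCount]
  have himg : (((sites Lx Ly).powersetCard 2).filter
      (fun s => ∃ p ∈ s, ∃ q ∈ s, p ≠ q ∧ taxi p q = m))
      = (Sall Lx Ly m).image (fun pq => {pq.1, pq.2}) := by
    ext s
    simp only [Finset.mem_filter, Finset.mem_powersetCard, Finset.mem_image]
    constructor
    · rintro ⟨⟨hsub, hcard⟩, p, hp, q, hq, hpq, htaxi⟩
      have hps := hsub hp; have hqs := hsub hq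
      have hseq : s = {p, q} := by
        symm
        apply Finset.eq_of_subset_of_card_le
        · intro x hx
          simp only [Finset.mem_insert, Finset.mem_singleton] at hx
          rcases hx with rfl|rfl <;> assumption
        · rw [hcard, Finset.card_insert_of_notMem (by simp [hpq]), Finset.card_singleton]
      have hx : p.1 ≠ q.1 := by
        intro h
        have h1 := mem_sites.mp hps
        have h2 := mem_sites.mp hqs
        unfold taxi at htaxi
        rw [h, sub_self, abs_zero] at htaxi
        rcases abs_cases (p.2 - q.2) with ⟨f1,f2⟩|⟨f1,f2⟩ <;> omega
      rcases lt_or_gt_of_ne hx with h|h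
      · exact ⟨(p,q), mem_Sall.mpr ⟨hps, hqs, h, htaxi⟩, hseq.symm⟩
      · refine ⟨(q,p), mem_Sall.mpr ⟨hqs, hps, h, by rw [← taxi_comm]; exact htaxi⟩, ?_⟩
        rw [hseq]; exact Finset.pair_comm q p
    · rintro ⟨⟨p,q⟩, hmem, rfl⟩
      obtain ⟨hp, hq, hlt, ht⟩ := mem_Sall.mp hmem
      have hpq : p ≠ q := fun h => by rw [h] at hlt; exact lt_irrefl _ hlt
      refine ⟨⟨?_, ?_⟩, p, by simp, q, by simp, hpq, ht⟩
      · intro x hx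
        simp only [Finset.mem_insert, Finset.mem_singleton] at hx
        rcases hx with rfl|rfl <;> assumption
      · rw [Finset.card_insert_of_notMem (by simp [hpq]), Finset.card_singleton]
  rw [himg, Finset.card_image_of_injOn]
  rintro ⟨⟨a,b⟩,⟨c,d⟩⟩ h1 ⟨⟨a',b'⟩,⟨c',d'⟩⟩ h2 heq
  simp only [Finset.mem_coe] at h1 h2
  obtain ⟨_, _, hlt, _⟩ := mem_Sall.mp h1
  obtain ⟨_, _, hlt', _⟩ := mem_Sall.mp h2
  simp only at heq hlt hlt' ⊢
  have h1p : ((a,b) : ℤ×ℤ) ∈ ({(a',b'), (c',d')} : Finset (ℤ×ℤ)) := by rw [← heq]; simp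
  have h1q : ((c,d) : ℤ×ℤ) ∈ ({(a',b'), (c',d')} : Finset (ℤ×ℤ)) := by rw [← heq]; simp
  simp only [Finset.mem_insert, Finset.mem_singleton, Prod.mk.injEq] at h1p h1q ⊢
  omega

lemma Sneg_card (Lx Ly m : ℤ) (hLx : Lx ≤ m) :
    (Sneg Lx Ly m).card = (Spos Lx Ly m).card := by
  refine Finset.card_nbij'
    (fun pq => ((pq.1.1, Ly + 1 - pq.1.2), (pq.2.1, Ly + 1 - pq.2.2)))
    (fun pq => ((pq.1.1, Ly + 1 - pq.1.2), (pq.2.1, Ly + 1 - pq.2.2))) ?_ ?_ ?_ ?_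
  · rintro ⟨⟨a,b⟩,⟨c,d⟩⟩ h
    rw [Finset.mem_coe, mem_Sneg hLx] at h
    rw [Finset.mem_coe, mem_Spos]
    simp only at h ⊢
    omega
  · rintro ⟨⟨a,b⟩,⟨c,d⟩⟩ h
    rw [Finset.mem_coe, mem_Spos] at h
    rw [Finset.mem_coe, mem_Sneg hLx]
    simp only at h ⊢
    omega
  · rintro ⟨⟨a,b⟩,⟨c,d⟩⟩ h
    simp only [Prod.mk.injEq]
    exact ⟨⟨trivial, by omega⟩, trivial, by omega⟩
  · rintro ⟨⟨a,b⟩,⟨c,d⟩⟩ h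
    simp only [Prod.mk.injEq]
    exact ⟨⟨trivial, by omega⟩, trivial, by omega⟩

lemma Spos_card (Lx Ly m : ℤ) (hLx : Lx ≤ m) (hLy : Ly ≤ m) (hm2 : m ≤ Lx + Ly - 2) :
    ((Spos Lx Ly m).card : ℤ) * 6 =
      (Lx + Ly - 1 - m) * ((Lx + Ly - 1 - m) + 1) * ((Lx + Ly - 1 - m) + 2) := by
  set k : ℤ := Lx + Ly - 1 - m with hk
  set K : ℕ := k.toNat with hKdef
  have hk1 : 1 ≤ k := by omega
  have hK : (K:ℤ) = k := by omega
  have hbij : (Spos Lx Ly m).card =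
      ((Finset.range K).sigma (fun j =>
        Finset.Icc (1:ℤ) (k - j) ×ˢ Finset.Icc (1:ℤ) ((j:ℤ)+1))).card := by
    refine Finset.card_nbij'
      (fun pq => ⟨(pq.2.1 - pq.1.1 - (m - Ly + 1)).toNat, (pq.1.1, pq.1.2)⟩)
      (fun x => ((x.2.1, x.2.2), (x.2.1 + (m - Ly + 1 + x.1), x.2.2 + (Ly - 1 - x.1)))) ?_ ?_ ?_ ?_
    · rintro ⟨⟨a,b⟩,⟨c,d⟩⟩ h
      rw [Finset.mem_coe, mem_Spos] at h
      simp only [Finset.mem_coe, Finset.mem_sigma, Finset.mem_range, Finset.mem_product, Finset.mem_Icc] at h ⊢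
      omega
    · rintro ⟨j, x, y⟩ h
      simp only [Finset.mem_coe, Finset.mem_sigma, Finset.mem_range, Finset.mem_product, Finset.mem_Icc] at h
      rw [Finset.mem_coe, mem_Spos]
      simp only
      omega
    · rintro ⟨⟨a,b⟩,⟨c,d⟩⟩ h
      rw [Finset.mem_coe, mem_Spos] at h
      dsimp only at h
      simp only [Prod.mk.injEq]
      exact ⟨trivial, by omega, by omega⟩
    · rintro ⟨j, x, y⟩ h
      simp only [Finset.mem_coe, Finset.mem_sigma, Finset.mem_range, Finset.mem_product, Finset.mem_Icc] at h
      simp only [Sigma.mk.inj_iff, Prod.mk.injEq, heq_eq_eq]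
      exact ⟨by omega, trivial⟩
  have hcardT : ((Finset.range K).sigma (fun j =>
        Finset.Icc (1:ℤ) (k - j) ×ˢ Finset.Icc (1:ℤ) ((j:ℤ)+1))).card
      = ∑ j ∈ Finset.range K, (k - j).toNat * (j + 1) := by
    rw [Finset.card_sigma]
    refine Finset.sum_congr rfl (fun j hj => ?_)
    rw [Finset.card_product, Int.card_Icc, Int.card_Icc]
    congr 1
    · congr 1; ring
    · omega
  have hcast : ((∑ j ∈ Finset.range K, (k - j).toNat * (j + 1) : ℕ) : ℤ)
      = ∑ j ∈ Finset.range K, ((j:ℤ)+1) * ((K:ℤ) - j) := by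
    push_cast
    refine Finset.sum_congr rfl (fun j hj => ?_)
    simp only [Finset.mem_range] at hj
    have : ((k - (j:ℤ)).toNat : ℤ) = k - j := by omega
    rw [this, hK]
    ring
  rw [hbij, hcardT]
  rw [show ((∑ j ∈ Finset.range K, (k - j).toNat * (j + 1) : ℕ) : ℤ) * 6
      = 6 * ∑ j ∈ Finset.range K, ((j:ℤ)+1) * ((K:ℤ) - j) by rw [hcast]; ring]
  rw [sum_aux K, hK]

theorem stmt1 (Lx Ly m : ℤ) (hLx : 1 ≤ Lx) (hLy : 1 ≤ Ly)
    (hm1 : max Lx Ly ≤ m) (hm2 : m ≤ Lx + Ly - 2) :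
    (pairCount Lx Ly m : ℤ) =
      (Lx + Ly - 1 - m) * ((Lx + Ly - 1 - m) + 1) * ((Lx + Ly - 1 - m) + 2) / 3 := by
  have hLxm : Lx ≤ m := le_trans (le_max_left _ _) hm1
  have hLym : Ly ≤ m := le_trans (le_max_right _ _) hm1
  have h1 : pairCount Lx Ly m = (Sall Lx Ly m).card := pairCount_eq Lx Ly m hLym
  have h2 : (Spos Lx Ly m).card + (Sneg Lx Ly m).card = (Sall Lx Ly m).card := by
    rw [Spos, Sneg]
    exact Finset.card_filter_add_card_filter_not _
  have h3 := Spos_card Lx Ly m hLxm hLym hm2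
  have h4 := Sneg_card Lx Ly m hLxm
  rw [← h3]
  omega
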